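/- Under the single-step uniform label noise model with noise rate ε ∈ (0,1), for every α ∈ (0,1) and every fixed τ ∈ ℝ, the robust pinball subgradient is an unbiased estimate of the clean pinball subgradient: E[1{S ≤ τ} − (1−α)] = E[ (1/(1−ε))·(1{S̃ ≤ τ} − (1−α)) − (ε/(K(1−ε)))·Σ_{y=1}^K (1{S_y ≤ τ} − (1−α)) ]. -/

import Mathlib

open MeasureTheory ProbabilityTheory

section Helpers
open Classical
variable {Ω : Type*} [MeasurableSpace Ω] (μ : Measure Ω)

lemma integral_ite_mem' [IsProbabilityMeasure μ] {s : Set Ω} (hs : MeasurableSet s) :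
    ∫ ω, s.indicator (fun _ => (1:ℝ)) ω ∂μ = (μ s).toReal :=
  integral_indicator_one hs

lemma integrable_ite_mem' [IsProbabilityMeasure μ] {s : Set Ω} (hs : MeasurableSet s) :
    Integrable (s.indicator (fun _ => (1:ℝ))) μ :=
  (integrable_const 1).indicator hs

end Helpers

/-- the robust pinball subgradient is an unbiased estimate of the clean pinball
subgradient under the single-step uniform label noise model. -/
theorem robust_pinball_grad_unbiased
    {Ω 𝒳 : Type*} [MeasurableSpace Ω] [MeasurableSpace 𝒳]
    (μ : Measure Ω) [IsProbabilityMeasure μ]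
    (K : ℕ) (hK : 1 ≤ K) (ε : ℝ) (hε : ε ∈ Set.Ioo (0:ℝ) 1)
    (X : Ω → 𝒳) (Y : Ω → Fin K) (U : Ω → ℝ) (Ybar : Ω → Fin K)
    (hX : Measurable X) (hY : Measurable Y) (hU : Measurable U) (hYbar : Measurable Ybar)
    -- U is uniformly distributed on [0,1]
    (hU_unif : Measure.map U μ = volume.restrict (Set.Icc (0:ℝ) 1))
    -- Ȳ is uniformly distributed on {1,…,K}
    (hYbar_unif : ∀ y : Fin K, μ {ω | Ybar ω = y} = (K : ENNReal)⁻¹)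
    -- U, Ȳ and the pair (X, Y) are mutually independent
    (hIndep : iIndep
      ![MeasurableSpace.comap U inferInstance,
        MeasurableSpace.comap Ybar inferInstance,
        MeasurableSpace.comap (fun ω => (X ω, Y ω)) inferInstance] μ)
    -- the score function, measurable with values in [0,1]
    (𝒮 : 𝒳 → Fin K → ℝ) (h𝒮 : ∀ y, Measurable fun x => 𝒮 x y)
    (h𝒮range : ∀ x y, 𝒮 x y ∈ Set.Icc (0:ℝ) 1)
    -- the noisy label
    (Ytil : Ω → Fin K) (hYtil : ∀ ω, Ytil ω = if ε ≤ U ω then Y ω else Ybar ω)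
    (α τ : ℝ) (hα : α ∈ Set.Ioo (0:ℝ) 1) :
    ∫ ω, ((if 𝒮 (X ω) (Y ω) ≤ τ then (1:ℝ) else 0) - (1 - α)) ∂μ
      = ∫ ω, ((1 / (1 - ε)) * ((if 𝒮 (X ω) (Ytil ω) ≤ τ then (1:ℝ) else 0) - (1 - α))
          - (ε / ((K : ℝ) * (1 - ε)))
              * ∑ y : Fin K, ((if 𝒮 (X ω) y ≤ τ then (1:ℝ) else 0) - (1 - α))) ∂μ := by
  classical
  obtain ⟨hε0, hε1⟩ := hε
  have hε1' : (0:ℝ) < 1 - ε := by linarith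
  have hKpos : (0:ℝ) < (K:ℝ) := by exact_mod_cast hK
  set c : ℝ := 1 - α with hc
  -- the sets
  set A : Set Ω := U ⁻¹' Set.Ici ε with hAdef
  set B : Set Ω := (fun ω => (X ω, Y ω)) ⁻¹' {p : 𝒳 × Fin K | 𝒮 p.1 p.2 ≤ τ} with hBdef
  set C : Fin K → Set Ω := fun y => Ybar ⁻¹' {y} with hCdef
  set D : Fin K → Set Ω := fun y => (fun ω => (X ω, Y ω)) ⁻¹' {p : 𝒳 × Fin K | 𝒮 p.1 y ≤ τ}
    with hDdef
  have hSmeas : Measurable fun p : 𝒳 × Fin K => 𝒮 p.1 p.2 :=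
    measurable_from_prod_countable_left fun y => h𝒮 y
  have hXY : Measurable fun ω => (X ω, Y ω) := hX.prodMk hY
  have hAm : MeasurableSet A := hU measurableSet_Ici
  have hBm : MeasurableSet B := hXY (hSmeas measurableSet_Iic)
  have hCm : ∀ y, MeasurableSet (C y) := fun y => hYbar (measurableSet_singleton y)
  have hDm : ∀ y, MeasurableSet (D y) := fun y =>
    hXY (((h𝒮 y).comp measurable_fst) measurableSet_Iic)
  -- membership in comap σ-algebras
  have hAc : MeasurableSet[MeasurableSpace.comap U inferInstance] A :=
    ⟨Set.Ici ε, measurableSet_Ici, rfl⟩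
  have hAcc : MeasurableSet[MeasurableSpace.comap U inferInstance] Aᶜ :=
    hAc.compl
  have hCc : ∀ y, MeasurableSet[MeasurableSpace.comap Ybar inferInstance] (C y) :=
    fun y => ⟨{y}, measurableSet_singleton y, rfl⟩
  have hBc : MeasurableSet[MeasurableSpace.comap (fun ω => (X ω, Y ω)) inferInstance] B :=
    ⟨{p : 𝒳 × Fin K | 𝒮 p.1 p.2 ≤ τ}, hSmeas measurableSet_Iic, rfl⟩
  have hDc : ∀ y, MeasurableSet[MeasurableSpace.comap (fun ω => (X ω, Y ω)) inferInstance] (D y) :=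
    fun y => ⟨{p : 𝒳 × Fin K | 𝒮 p.1 y ≤ τ}, ((h𝒮 y).comp measurable_fst) measurableSet_Iic, rfl⟩
  -- measures of A and Aᶜ
  have hμA : μ A = ENNReal.ofReal (1 - ε) := by
    rw [hAdef, ← Measure.map_apply hU measurableSet_Ici, hU_unif,
      Measure.restrict_apply measurableSet_Ici]
    rw [show Set.Ici ε ∩ Set.Icc (0:ℝ) 1 = Set.Icc ε 1 by
      ext x; simp only [Set.mem_inter_iff, Set.mem_Ici, Set.mem_Icc]
      constructor
      · rintro ⟨h1, _, h3⟩; exact ⟨h1, h3⟩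
      · rintro ⟨h1, h2⟩; exact ⟨h1, by linarith, h2⟩]
    rw [Real.volume_Icc]
  have hμAc : μ Aᶜ = ENNReal.ofReal ε := by
    rw [prob_compl_eq_one_sub hAm, hμA]
    rw [← ENNReal.ofReal_one, ← ENNReal.ofReal_sub _ (by linarith)]
    norm_num
  -- independence consequences
  have hIndep' := (iIndep_iff _ _).1 hIndep
  have hμAB : μ (A ∩ B) = μ A * μ B := by
    have h := hIndep' {0, 2} (f := ![A, ∅, B]) (by
      intro i hi
      fin_cases hi
      · exact hAc
      · exact hBc)
    have e1 : (⋂ i ∈ ({0, 2} : Finset (Fin 3)), (![A, ∅, B]) i) = A ∩ B := by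
      simp only [Finset.set_biInter_insert, Finset.set_biInter_singleton]
      rfl
    have e2 : (∏ i ∈ ({0, 2} : Finset (Fin 3)), μ ((![A, ∅, B]) i)) = μ A * μ B := by
      rw [Finset.prod_pair (by decide : (0 : Fin 3) ≠ 2)]
      rfl
    rw [e1, e2] at h
    exact h
  have hμACD : ∀ y, μ (Aᶜ ∩ (C y ∩ D y)) = μ Aᶜ * (μ (C y) * μ (D y)) := by
    intro y
    have h := hIndep' {0, 1, 2} (f := ![Aᶜ, C y, D y]) (by
      intro i hi
      fin_cases hi
      · exact hAcc
      · exact hCc y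
      · exact hDc y)
    have e1 : (⋂ i ∈ ({0, 1, 2} : Finset (Fin 3)), (![Aᶜ, C y, D y]) i)
        = Aᶜ ∩ (C y ∩ D y) := by
      simp only [Finset.set_biInter_insert, Finset.set_biInter_singleton]
      rfl
    have e2 : (∏ i ∈ ({0, 1, 2} : Finset (Fin 3)), μ ((![Aᶜ, C y, D y]) i))
        = μ Aᶜ * (μ (C y) * μ (D y)) := by
      rw [Finset.prod_insert (by decide), Finset.prod_pair (by decide : (1 : Fin 3) ≠ 2)]
      rfl
    rw [e1, e2] at h
    exact h
  -- real-valued quantities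
  set b : ℝ := (μ B).toReal with hb
  set d : Fin K → ℝ := fun y => (μ (D y)).toReal with hd
  have hμC : ∀ y, μ (C y) = (K : ENNReal)⁻¹ := by
    intro y
    rw [show C y = {ω | Ybar ω = y} from rfl, hYbar_unif y]
  have htoAB : (μ (A ∩ B)).toReal = (1 - ε) * b := by
    rw [hμAB, ENNReal.toReal_mul, hμA, ENNReal.toReal_ofReal (by linarith)]
  have htoACD : ∀ y, (μ (Aᶜ ∩ (C y ∩ D y))).toReal = ε * ((K:ℝ)⁻¹ * d y) := by
    intro y
    rw [hμACD y, ENNReal.toReal_mul, ENNReal.toReal_mul, hμAc, hμC y,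
      ENNReal.toReal_ofReal (le_of_lt hε0)]
    congr 2
    simp
  -- pointwise decompositions
  have hclean : ∀ ω, (if 𝒮 (X ω) (Y ω) ≤ τ then (1:ℝ) else 0)
      = B.indicator (fun _ => (1:ℝ)) ω := by
    intro ω
    by_cases hs : 𝒮 (X ω) (Y ω) ≤ τ <;> simp [Set.indicator_apply, hBdef, hs]
  have hDind : ∀ y ω, (if 𝒮 (X ω) y ≤ τ then (1:ℝ) else 0)
      = (D y).indicator (fun _ => (1:ℝ)) ω := by
    intro y ω
    by_cases hs : 𝒮 (X ω) y ≤ τ <;> simp [Set.indicator_apply, hDdef, hs]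
  have hnoisy : ∀ ω, (if 𝒮 (X ω) (Ytil ω) ≤ τ then (1:ℝ) else 0)
      = (A ∩ B).indicator (fun _ => (1:ℝ)) ω
        + ∑ y : Fin K, (Aᶜ ∩ (C y ∩ D y)).indicator (fun _ => (1:ℝ)) ω := by
    intro ω
    rw [hYtil ω]
    by_cases h : ε ≤ U ω
    · have h1 : ω ∈ A := h
      rw [if_pos h]
      have h2 : ∀ y : Fin K, (Aᶜ ∩ (C y ∩ D y)).indicator (fun _ => (1:ℝ)) ω = 0 :=
        fun y => Set.indicator_of_notMem (fun hm => hm.1 h1) _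
      rw [Finset.sum_congr rfl fun y _ => h2 y, Finset.sum_const_zero, add_zero]
      by_cases hs : 𝒮 (X ω) (Y ω) ≤ τ <;> simp [Set.indicator_apply, hAdef, hBdef, hs, h]
    · rw [if_neg h]
      rw [Set.indicator_of_notMem (fun hm : ω ∈ A ∩ B => h hm.1), zero_add]
      rw [Finset.sum_eq_single (Ybar ω)
        (fun y _ hy => Set.indicator_of_notMem
          (fun hm => hy (show Ybar ω = y from hm.2.1).symm) _)
        (fun hy => absurd (Finset.mem_univ _) hy)]
      by_cases hs : 𝒮 (X ω) (Ybar ω) ≤ τ <;> simp [Set.indicator_apply, hAdef, hCdef, hDdef, hs, h]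
  -- integrability
  have intB : Integrable (B.indicator (fun _ => (1:ℝ))) μ :=
    integrable_ite_mem' μ hBm
  have intAB : Integrable ((A ∩ B).indicator (fun _ => (1:ℝ))) μ :=
    integrable_ite_mem' μ (hAm.inter hBm)
  have intACD : ∀ y, Integrable ((Aᶜ ∩ (C y ∩ D y)).indicator (fun _ => (1:ℝ))) μ :=
    fun y => integrable_ite_mem' μ (hAm.compl.inter ((hCm y).inter (hDm y)))
  have intsumACD : Integrable
      (fun ω => ∑ y : Fin K, (Aᶜ ∩ (C y ∩ D y)).indicator (fun _ => (1:ℝ)) ω) μ := by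
    have h := integrable_finset_sum (μ := μ)
      (f := fun (y : Fin K) ω => (Aᶜ ∩ (C y ∩ D y)).indicator (fun _ => (1:ℝ)) ω)
      Finset.univ (fun y _ => intACD y)
    exact h
  have hint_noisy : Integrable (fun ω => (if 𝒮 (X ω) (Ytil ω) ≤ τ then (1:ℝ) else 0)) μ := by
    have h : Integrable (fun ω => (A ∩ B).indicator (fun _ => (1:ℝ)) ω
        + ∑ y : Fin K, (Aᶜ ∩ (C y ∩ D y)).indicator (fun _ => (1:ℝ)) ω) μ := intAB.add intsumACD
    exact h.congr (ae_of_all μ fun ω => (hnoisy ω).symm)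
  have hint_clean : Integrable (fun ω => (if 𝒮 (X ω) (Y ω) ≤ τ then (1:ℝ) else 0)) μ :=
    intB.congr (ae_of_all μ fun ω => (hclean ω).symm)
  have intD : ∀ y, Integrable (fun ω => (if 𝒮 (X ω) y ≤ τ then (1:ℝ) else 0) - c) μ := by
    intro y
    have h : Integrable (fun ω => (D y).indicator (fun _ => (1:ℝ)) ω - c) μ :=
      (integrable_ite_mem' μ (hDm y)).sub (integrable_const c)
    exact h.congr (ae_of_all μ fun ω => by simp only [hDind y ω])
  have intsumD : Integrable
      (fun ω => ∑ y : Fin K, ((if 𝒮 (X ω) y ≤ τ then (1:ℝ) else 0) - c)) μ := by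
    have h := integrable_finset_sum (μ := μ)
      (f := fun (y : Fin K) ω => (if 𝒮 (X ω) y ≤ τ then (1:ℝ) else 0) - c)
      Finset.univ (fun y _ => intD y)
    exact h
  -- LHS value
  have hLHS : ∫ ω, ((if 𝒮 (X ω) (Y ω) ≤ τ then (1:ℝ) else 0) - c) ∂μ = b - c := by
    rw [integral_sub hint_clean (integrable_const c)]
    rw [integral_congr_ae (ae_of_all μ hclean), integral_ite_mem' μ hBm, integral_const]
    simp [hb]
  -- value of the noisy integral
  have hInoisy : ∫ ω, (if 𝒮 (X ω) (Ytil ω) ≤ τ then (1:ℝ) else 0) ∂μ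
      = (1 - ε) * b + ∑ y : Fin K, ε * ((K:ℝ)⁻¹ * d y) := by
    rw [integral_congr_ae (ae_of_all μ hnoisy)]
    rw [integral_add intAB intsumACD]
    rw [integral_ite_mem' μ (hAm.inter hBm), htoAB]
    congr 1
    rw [integral_finset_sum Finset.univ (fun y _ => intACD y)]
    refine Finset.sum_congr rfl fun y _ => ?_
    rw [integral_ite_mem' μ (hAm.compl.inter ((hCm y).inter (hDm y))), htoACD y]
  -- value of the sum integral
  have hIsumD : ∫ ω, (∑ y : Fin K, ((if 𝒮 (X ω) y ≤ τ then (1:ℝ) else 0) - c)) ∂μ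
      = (∑ y : Fin K, d y) - (K:ℝ) * c := by
    rw [integral_finset_sum Finset.univ (fun y _ => intD y)]
    have h : ∀ y : Fin K, ∫ ω, ((if 𝒮 (X ω) y ≤ τ then (1:ℝ) else 0) - c) ∂μ = d y - c := by
      intro y
      rw [integral_sub ((integrable_ite_mem' μ (hDm y)).congr
          (ae_of_all μ fun ω => (hDind y ω).symm)) (integrable_const c)]
      rw [integral_congr_ae (ae_of_all μ fun ω => hDind y ω), integral_ite_mem' μ (hDm y),
        integral_const]
      simp [hd]
    rw [Finset.sum_congr rfl fun y _ => h y, Finset.sum_sub_distrib]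
    simp [mul_comm]
  -- put it together
  rw [hLHS]
  have int1 : Integrable (fun ω =>
      (1 / (1 - ε)) * ((if 𝒮 (X ω) (Ytil ω) ≤ τ then (1:ℝ) else 0) - c)) μ :=
    (hint_noisy.sub (integrable_const c)).const_mul _
  have int2 : Integrable (fun ω =>
      (ε / ((K : ℝ) * (1 - ε))) * ∑ y : Fin K, ((if 𝒮 (X ω) y ≤ τ then (1:ℝ) else 0) - c)) μ :=
    intsumD.const_mul _
  rw [integral_sub int1 int2, integral_const_mul, integral_const_mul,
    integral_sub hint_noisy (integrable_const c), hInoisy, integral_const, hIsumD]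
  simp only [measure_univ, ENNReal.toReal_one, probReal_univ, smul_eq_mul, one_mul]
  have hKne : (K:ℝ) ≠ 0 := ne_of_gt hKpos
  have hεne : (1:ℝ) - ε ≠ 0 := ne_of_gt hε1'
  have hsum2 : (∑ y : Fin K, ε * ((K:ℝ)⁻¹ * d y)) = ε * (K:ℝ)⁻¹ * ∑ y : Fin K, d y := by
    rw [Finset.mul_sum]
    exact Finset.sum_congr rfl fun y _ => (mul_assoc _ _ _).symm
  rw [hsum2]
  field_simp
  ring
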